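/- Let E : ℝ² → ℝ be twice continuously differentiable (C²) and let g : ℝ² → ℝ be continuously differentiable (C¹). For k ∈ {1,2,3}, let G be the vector field G(x,y,z) = g(x,y) · B. Then for every point p ∈ ℝ³ there exists a real scalar t such that [[f₀, f_k], G](p) = t · B; that is, the Lie bracket of [f₀, f_k] with any vector field of the form g·B is pointwise a scalar multiple of B. -/

import Mathlib

open VectorField

theorem stmt4 (α₁ α₂ α₃ β₁₁ β₁₂ β₁₃ β₂₂ β₂₂' β₃₂ β₃₃ : ℝ)
    (γ₁ γ₂ : Fin 3 → ℝ) (E : ℝ × ℝ → ℝ) (hE : ContDiff ℝ 2 E)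
    (g : ℝ × ℝ → ℝ) (hg : ContDiff ℝ 1 g)
    (f₀ : ℝ × ℝ × ℝ → ℝ × ℝ × ℝ)
    (hf₀ : f₀ = fun p => (α₁ + β₁₁ * p.1 + β₁₂ * E (p.1, p.2.1),
      α₂ + β₂₂ * p.2.1 + β₂₂' * E (p.1, p.2.1) + β₁₃ * p.2.2,
      α₃ + β₃₂ * p.2.1 + β₃₃ * p.2.2))
    (f : Fin 3 → ℝ × ℝ × ℝ → ℝ × ℝ × ℝ)
    (hf : f = fun j _ => (γ₁ j, γ₂ j, (0 : ℝ)))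
    (B : ℝ × ℝ × ℝ) (hB : B = (-β₁₂, -β₂₂', (0 : ℝ)))
    (k : Fin 3)
    (G : ℝ × ℝ × ℝ → ℝ × ℝ × ℝ) (hG : G = fun q => g (q.1, q.2.1) • B) :
    ∀ p : ℝ × ℝ × ℝ, ∃ t : ℝ,
      lieBracket ℝ (lieBracket ℝ f₀ (f k)) G p = t • B := by
  -- notation
  set π : (ℝ × ℝ × ℝ) →L[ℝ] (ℝ × ℝ) :=
    (ContinuousLinearMap.fst ℝ ℝ (ℝ × ℝ)).prod
      ((ContinuousLinearMap.fst ℝ ℝ ℝ).comp (ContinuousLinearMap.snd ℝ ℝ (ℝ × ℝ))) with hπdef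
  have hπ : ∀ p : ℝ × ℝ × ℝ, HasFDerivAt (fun q : ℝ × ℝ × ℝ => (q.1, q.2.1)) π p :=
    fun p => π.hasFDerivAt
  set c₂ : ℝ × ℝ := (γ₁ k, γ₂ k) with hc₂
  set e : ℝ × ℝ × ℝ → ℝ := fun p => fderiv ℝ E (p.1, p.2.1) c₂ with he
  set v₀ : ℝ × ℝ × ℝ := (-(β₁₁ * γ₁ k), -(β₂₂ * γ₂ k), -(β₃₂ * γ₂ k)) with hv₀
  -- derivative of E ∘ π
  have hEd : Differentiable ℝ E := hE.differentiable two_ne_zero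
  have hEπ : ∀ p : ℝ × ℝ × ℝ, HasFDerivAt (fun q : ℝ × ℝ × ℝ => E (q.1, q.2.1))
      ((fderiv ℝ E (p.1, p.2.1)).comp π) p :=
    fun p => ((hEd (p.1, p.2.1)).hasFDerivAt).comp p (hπ p)
  -- explicit derivative of f₀
  have hf₀d : ∀ p : ℝ × ℝ × ℝ, HasFDerivAt f₀
      ((β₁₁ • (ContinuousLinearMap.fst ℝ ℝ (ℝ × ℝ)) + β₁₂ • ((fderiv ℝ E (p.1, p.2.1)).comp π)).prod
        (((β₂₂ • ((ContinuousLinearMap.fst ℝ ℝ ℝ).comp (ContinuousLinearMap.snd ℝ ℝ (ℝ × ℝ)))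
            + β₂₂' • ((fderiv ℝ E (p.1, p.2.1)).comp π))
            + β₁₃ • ((ContinuousLinearMap.snd ℝ ℝ ℝ).comp (ContinuousLinearMap.snd ℝ ℝ (ℝ × ℝ)))).prod
          (β₃₂ • ((ContinuousLinearMap.fst ℝ ℝ ℝ).comp (ContinuousLinearMap.snd ℝ ℝ (ℝ × ℝ)))
            + β₃₃ • ((ContinuousLinearMap.snd ℝ ℝ ℝ).comp (ContinuousLinearMap.snd ℝ ℝ (ℝ × ℝ)))))) p := by
    intro p
    rw [hf₀]
    have h1 : HasFDerivAt (fun q : ℝ × ℝ × ℝ => q.1)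
        (ContinuousLinearMap.fst ℝ ℝ (ℝ × ℝ)) p := hasFDerivAt_fst
    have h21 : HasFDerivAt (fun q : ℝ × ℝ × ℝ => q.2.1)
        ((ContinuousLinearMap.fst ℝ ℝ ℝ).comp (ContinuousLinearMap.snd ℝ ℝ (ℝ × ℝ))) p :=
      hasFDerivAt_fst.comp p hasFDerivAt_snd
    have h22 : HasFDerivAt (fun q : ℝ × ℝ × ℝ => q.2.2)
        ((ContinuousLinearMap.snd ℝ ℝ ℝ).comp (ContinuousLinearMap.snd ℝ ℝ (ℝ × ℝ))) p :=
      hasFDerivAt_snd.comp p hasFDerivAt_snd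
    have hA : HasFDerivAt (fun q : ℝ × ℝ × ℝ => α₁ + β₁₁ * q.1 + β₁₂ * E (q.1, q.2.1))
        (β₁₁ • (ContinuousLinearMap.fst ℝ ℝ (ℝ × ℝ)) + β₁₂ • ((fderiv ℝ E (p.1, p.2.1)).comp π)) p := by
      exact ((h1.const_mul β₁₁).const_add α₁).add ((hEπ p).const_mul β₁₂)
    have hB2 : HasFDerivAt (fun q : ℝ × ℝ × ℝ =>
        α₂ + β₂₂ * q.2.1 + β₂₂' * E (q.1, q.2.1) + β₁₃ * q.2.2)
        ((β₂₂ • ((ContinuousLinearMap.fst ℝ ℝ ℝ).comp (ContinuousLinearMap.snd ℝ ℝ (ℝ × ℝ)))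
          + β₂₂' • ((fderiv ℝ E (p.1, p.2.1)).comp π))
          + β₁₃ • ((ContinuousLinearMap.snd ℝ ℝ ℝ).comp (ContinuousLinearMap.snd ℝ ℝ (ℝ × ℝ)))) p := by
      exact (((h21.const_mul β₂₂).const_add α₂).add ((hEπ p).const_mul β₂₂')).add
        (h22.const_mul β₁₃)
    have hC : HasFDerivAt (fun q : ℝ × ℝ × ℝ => α₃ + β₃₂ * q.2.1 + β₃₃ * q.2.2)
        (β₃₂ • ((ContinuousLinearMap.fst ℝ ℝ ℝ).comp (ContinuousLinearMap.snd ℝ ℝ (ℝ × ℝ)))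
          + β₃₃ • ((ContinuousLinearMap.snd ℝ ℝ ℝ).comp (ContinuousLinearMap.snd ℝ ℝ (ℝ × ℝ)))) p := by
      exact ((h21.const_mul β₃₂).const_add α₃).add (h22.const_mul β₃₃)
    exact HasFDerivAt.prodMk hA (HasFDerivAt.prodMk hB2 hC)
  -- the first bracket, explicitly
  have hh : lieBracket ℝ f₀ (f k) = fun p => v₀ + e p • B := by
    funext p
    have hfk : fderiv ℝ (f k) p = 0 := by
      rw [hf]; exact fderiv_const_apply _
    rw [lieBracket, hfk, (hf₀d p).fderiv]
    simp only [ContinuousLinearMap.zero_apply, zero_sub, hf, hB, hv₀, he, hc₂]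
    simp only [ContinuousLinearMap.prod_apply, ContinuousLinearMap.add_apply,
      ContinuousLinearMap.smul_apply, ContinuousLinearMap.coe_comp', Function.comp_apply,
      ContinuousLinearMap.coe_fst', ContinuousLinearMap.coe_snd', hπdef,
      ContinuousLinearMap.prod_apply, smul_eq_mul, Prod.neg_mk, Prod.mk_add_mk,
      Prod.smul_mk]
    simp only [Prod.mk.injEq]
    refine ⟨by ring, by ring, by ring⟩
  -- differentiability of e
  have hF : ContDiff ℝ 1 (fderiv ℝ E) := hE.fderiv_right (le_refl 2)
  intro p
  -- derivative of e at p
  have he1 : HasFDerivAt (fun q : ℝ × ℝ × ℝ => fderiv ℝ E (q.1, q.2.1))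
      ((fderiv ℝ (fderiv ℝ E) (p.1, p.2.1)).comp π) p :=
    ((hF.differentiable one_ne_zero (p.1, p.2.1)).hasFDerivAt).comp p (hπ p)
  have he2 : HasFDerivAt e
      ((ContinuousLinearMap.apply ℝ ℝ c₂).comp
        ((fderiv ℝ (fderiv ℝ E) (p.1, p.2.1)).comp π)) p :=
    ((ContinuousLinearMap.apply ℝ ℝ c₂).hasFDerivAt).comp p he1
  -- derivative of h
  have hhd : HasFDerivAt (lieBracket ℝ f₀ (f k))
      (((ContinuousLinearMap.apply ℝ ℝ c₂).comp
        ((fderiv ℝ (fderiv ℝ E) (p.1, p.2.1)).comp π)).smulRight B) p := by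
    rw [hh]
    exact (he2.smul_const B).const_add v₀
  -- derivative of G
  have hgd : HasFDerivAt G
      (((fderiv ℝ g (p.1, p.2.1)).comp π).smulRight B) p := by
    rw [hG]
    exact ((((hg.differentiable one_ne_zero) (p.1, p.2.1)).hasFDerivAt.comp p (hπ p)).smul_const B)
  refine ⟨((fderiv ℝ g (p.1, p.2.1)).comp π) (lieBracket ℝ f₀ (f k) p)
    - ((ContinuousLinearMap.apply ℝ ℝ c₂).comp
        ((fderiv ℝ (fderiv ℝ E) (p.1, p.2.1)).comp π)) (G p), ?_⟩
  rw [lieBracket, hgd.fderiv, hhd.fderiv]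
  simp only [ContinuousLinearMap.smulRight_apply, sub_smul]
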